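/- For every integer m ≥ 2 there exists a constant C > 0 such that for every integer N ≥ 2, the sum over all triples (j₁,j₂,j₄) of nonzero integers with |j₁| ≤ N, |j₂| ≤ N, |j₄| ≤ N and |j₁+j₂| > N, of 1/(|j₁|^{m+1}·|j₂|^{m-1}·|j₄|) is at most C·(log N)²/N. -/

import Mathlib

open Finset

lemma T_eq (N : ℕ) :
    (Finset.Icc (-(N : ℤ)) (N : ℤ)).filter (· ≠ 0)
      = Finset.Icc (-(N:ℤ)) (-1) ∪ Finset.Icc 1 (N:ℤ) := by
  ext j
  simp only [Finset.mem_filter, Finset.mem_Icc, Finset.mem_union, ne_eq]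
  omega

lemma sum_T (N : ℕ) (f : ℤ → ℝ) (hf : ∀ j, f (-j) = f j) :
    ∑ j ∈ (Finset.Icc (-(N : ℤ)) (N : ℤ)).filter (· ≠ 0), f j
      = 2 * ∑ k ∈ Finset.Icc (1:ℤ) (N:ℤ), f k := by
  have hd : Disjoint (Finset.Icc (-(N:ℤ)) (-1)) (Finset.Icc 1 (N:ℤ)) := by
    rw [Finset.disjoint_left]
    intro a ha hb
    simp only [Finset.mem_Icc] at ha hb
    omega
  rw [T_eq, Finset.sum_union hd]
  have himg : Finset.Icc (-(N:ℤ)) (-1) = (Finset.Icc (1:ℤ) N).image Neg.neg := by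
    ext j
    simp only [Finset.mem_Icc, Finset.mem_image]
    constructor
    · rintro ⟨h1, h2⟩; exact ⟨-j, by omega, by omega⟩
    · rintro ⟨k, hk, rfl⟩; omega
  rw [himg, Finset.sum_image (by intro x _ y _ h; omega)]
  simp only [hf]
  ring

lemma sum_inv_le (N : ℕ) (hN : 1 ≤ N) :
    ∑ k ∈ Finset.Icc (1:ℤ) (N:ℤ), 1/|(k:ℝ)| ≤ 1 + Real.log N := by
  induction N, hN using Nat.le_induction with
  | base => simp
  | succ n hn ih =>
    have hins : Finset.Icc (1:ℤ) ((n:ℤ)+1) = insert ((n:ℤ)+1) (Finset.Icc 1 (n:ℤ)) := by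
      ext j; simp only [Finset.mem_Icc, Finset.mem_insert]; omega
    have hnot : ((n:ℤ)+1) ∉ Finset.Icc (1:ℤ) (n:ℤ) := by
      simp only [Finset.mem_Icc]; omega
    have hnpos : (0:ℝ) < n := by exact_mod_cast hn
    have hlog : 1/((n:ℝ)+1) ≤ Real.log (n+1) - Real.log n := by
      have h1 : Real.log ((n:ℝ)/(n+1)) ≤ (n:ℝ)/(n+1) - 1 :=
        Real.log_le_sub_one_of_pos (by positivity)
      rw [Real.log_div (ne_of_gt hnpos) (by positivity)] at h1
      have : (n:ℝ)/(n+1) - 1 = -(1/((n:ℝ)+1)) := by field_simp; ring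
      rw [this] at h1
      linarith
    push_cast [hins, Finset.sum_insert hnot]
    have habs : |(n:ℝ)+1| = (n:ℝ)+1 := abs_of_pos (by positivity)
    rw [habs]
    push_cast at ih
    linarith

lemma sum_invsq_le (N : ℕ) (hN : 1 ≤ N) :
    ∑ k ∈ Finset.Icc (1:ℤ) (N:ℤ), 1/|(k:ℝ)|^2 ≤ 2 - 1/(N:ℝ) := by
  induction N, hN using Nat.le_induction with
  | base =>
    norm_num
  | succ n hn ih =>
    have hins : Finset.Icc (1:ℤ) ((n:ℤ)+1) = insert ((n:ℤ)+1) (Finset.Icc 1 (n:ℤ)) := by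
      ext j; simp only [Finset.mem_Icc, Finset.mem_insert]; omega
    have hnot : ((n:ℤ)+1) ∉ Finset.Icc (1:ℤ) (n:ℤ) := by
      simp only [Finset.mem_Icc]; omega
    have hnpos : (0:ℝ) < n := by exact_mod_cast hn
    have key : 1/((n:ℝ)+1)^2 ≤ 1/(n:ℝ) - 1/((n:ℝ)+1) := by
      rw [div_sub_div _ _ (ne_of_gt hnpos) (by positivity), div_le_div_iff₀ (by positivity) (by positivity)]
      ring_nf
      nlinarith
    push_cast [hins, Finset.sum_insert hnot]
    have habs : |(n:ℝ)+1| = (n:ℝ)+1 := abs_of_pos (by positivity)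
    rw [habs]
    push_cast at ih
    linarith

lemma termboundA (m : ℕ) (hm : 2 ≤ m) (a b n : ℝ) (ha : 1 ≤ a) (hb : 1 ≤ b) (hn : 0 < n)
    (han : n/2 ≤ a) :
    1/(a^(m+1) * b^(m-1)) ≤ (2/n*(1/a)) * (2/n*(1/b)) := by
  have ha0 : (0:ℝ) < a := by linarith
  have hb0 : (0:ℝ) < b := by linarith
  have h1 : a^3*b ≤ a^(m+1)*b^(m-1) :=
    mul_le_mul (pow_le_pow_right₀ ha (by omega)) (le_self_pow₀ hb (by omega))
      (by positivity) (by positivity)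
  have h2 : 1/(a^(m+1)*b^(m-1)) ≤ 1/(a^3*b) := one_div_le_one_div_of_le (by positivity) h1
  have h5 : 1/a^2 ≤ 4/n^2 := by
    rw [div_le_div_iff₀ (by positivity) (by positivity)]
    nlinarith
  calc 1/(a^(m+1)*b^(m-1)) ≤ 1/(a^3*b) := h2
    _ = (1/a^2)*(1/(a*b)) := by field_simp
    _ ≤ (4/n^2)*(1/(a*b)) := mul_le_mul_of_nonneg_right h5 (by positivity)
    _ = (2/n*(1/a)) * (2/n*(1/b)) := by ring

lemma termboundB (m : ℕ) (hm : 2 ≤ m) (a b n : ℝ) (ha : 1 ≤ a) (hb : 1 ≤ b) (hn : 0 < n)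
    (hbn : n/2 ≤ b) :
    1/(a^(m+1) * b^(m-1)) ≤ 2/n * (1/a^3) := by
  have ha0 : (0:ℝ) < a := by linarith
  have hb0 : (0:ℝ) < b := by linarith
  have h1 : a^3*b ≤ a^(m+1)*b^(m-1) :=
    mul_le_mul (pow_le_pow_right₀ ha (by omega)) (le_self_pow₀ hb (by omega))
      (by positivity) (by positivity)
  have h2 : 1/(a^(m+1)*b^(m-1)) ≤ 1/(a^3*b) := one_div_le_one_div_of_le (by positivity) h1
  have h5 : 1/b ≤ 2/n := by
    rw [div_le_div_iff₀ (by positivity) (by positivity)]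
    nlinarith
  calc 1/(a^(m+1)*b^(m-1)) ≤ 1/(a^3*b) := h2
    _ = (1/b)*(1/a^3) := by field_simp
    _ ≤ (2/n)*(1/a^3) := mul_le_mul_of_nonneg_right h5 (by positivity)

lemma cardbound (N : ℕ) (j₁ : ℤ) (h₁ : |j₁| ≤ (N:ℤ)) :
    (((Finset.Icc (-(N : ℤ)) (N : ℤ)).filter (· ≠ 0)).filter
        (fun j₂ => (N:ℤ) < |j₁ + j₂| ∧ |j₁| < |j₂|)).card ≤ 2 * j₁.natAbs := by
  have hA0 : (0:ℤ) ≤ |j₁| := abs_nonneg _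
  have hN' : j₁.natAbs ≤ N := by rw [Int.abs_eq_natAbs] at h₁; omega
  have hsub : ((Finset.Icc (-(N : ℤ)) (N : ℤ)).filter (· ≠ 0)).filter
        (fun j₂ => (N:ℤ) < |j₁ + j₂| ∧ |j₁| < |j₂|)
      ⊆ Finset.Icc (-(N:ℤ)) N \ Finset.Icc (-((N:ℤ) - |j₁|)) ((N:ℤ) - |j₁|) := by
    intro j₂ hj₂
    simp only [Finset.mem_filter, Finset.mem_Icc, Finset.mem_sdiff, ne_eq] at hj₂ ⊢
    have htri : |j₁ + j₂| ≤ |j₁| + |j₂| := abs_add_le _ _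
    rw [Int.abs_eq_natAbs] at *
    omega
  have hss : Finset.Icc (-((N:ℤ) - |j₁|)) ((N:ℤ) - |j₁|) ⊆ Finset.Icc (-(N:ℤ)) N :=
    Finset.Icc_subset_Icc (by linarith) (by linarith)
  have hthis := Finset.card_le_card hsub
  rw [Finset.card_sdiff_of_subset hss] at hthis
  have h2N : (Finset.Icc (-(N:ℤ)) N).card = 2*N+1 := by rw [Int.card_Icc]; omega
  have h2A : (Finset.Icc (-((N:ℤ) - |j₁|)) ((N:ℤ) - |j₁|)).card = 2*(N - j₁.natAbs)+1 := by
    rw [Int.card_Icc, Int.abs_eq_natAbs]; omega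
  rw [h2N, h2A] at hthis
  omega

lemma abs_cast_real (j : ℤ) : |(j:ℝ)| = ((j.natAbs : ℕ) : ℝ) := by
  rw [← Int.cast_abs, Int.abs_eq_natAbs, Int.cast_natCast]

set_option maxHeartbeats 2000000 in
theorem stmt_3 (m : ℕ) (hm : 2 ≤ m) :
    ∃ C : ℝ, 0 < C ∧ ∀ N : ℕ, 2 ≤ N →
      ∑ j₁ ∈ (Finset.Icc (-(N : ℤ)) (N : ℤ)).filter (· ≠ 0),
        ∑ j₂ ∈ (Finset.Icc (-(N : ℤ)) (N : ℤ)).filter (· ≠ 0),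
          ∑ j₄ ∈ (Finset.Icc (-(N : ℤ)) (N : ℤ)).filter (· ≠ 0),
            (if (N : ℤ) < |j₁ + j₂| then
               (1 : ℝ) / (|(j₁ : ℝ)| ^ (m + 1) * |(j₂ : ℝ)| ^ (m - 1) * |(j₄ : ℝ)|) else 0)
        ≤ C * (Real.log N) ^ 2 / N := by
  refine ⟨2000, by norm_num, ?_⟩
  intro N hN
  set T : Finset ℤ := (Finset.Icc (-(N : ℤ)) (N : ℤ)).filter (· ≠ 0) with hT
  set L : ℝ := Real.log N with hL
  have hn2 : (2:ℝ) ≤ (N:ℝ) := by exact_mod_cast hN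
  have hn0 : (0:ℝ) < (N:ℝ) := by linarith
  have hLlog2 : Real.log 2 ≤ L := Real.log_le_log (by norm_num) hn2
  have hLhalf : (1:ℝ)/2 ≤ L := by
    have := Real.log_two_gt_d9
    linarith
  have hLpos : (0:ℝ) < L := by linarith
  have hLn : L ≤ (N:ℝ) := by
    have := Real.log_le_sub_one_of_pos hn0
    linarith
  -- membership facts
  have hmem : ∀ j ∈ T, (1:ℝ) ≤ |(j:ℝ)| ∧ |(j:ℝ)| ≤ (N:ℝ) ∧ j ≠ 0 ∧ |j| ≤ (N:ℤ) := by
    intro j hj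
    rw [hT, Finset.mem_filter, Finset.mem_Icc] at hj
    obtain ⟨⟨hj1, hj2⟩, hj0⟩ := hj
    have habs : |j| ≤ (N:ℤ) := abs_le.mpr ⟨hj1, hj2⟩
    have h1 : (1:ℤ) ≤ |j| := by rw [Int.abs_eq_natAbs] at *; omega
    refine ⟨?_, ?_, hj0, habs⟩
    · rw [abs_cast_real]; rw [Int.abs_eq_natAbs] at h1; exact_mod_cast h1
    · rw [abs_cast_real]; rw [Int.abs_eq_natAbs] at habs; exact_mod_cast habs
  -- sum bounds
  have habsneg : ∀ j : ℤ, |((-j : ℤ) : ℝ)| = |(j:ℝ)| := by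
    intro j; push_cast; rw [abs_neg]
  have hK : ∑ j ∈ T, 1/|(j:ℝ)| ≤ 2*(1 + L) := by
    rw [hT, sum_T N _ (fun j => by rw [habsneg])]
    have := sum_inv_le N (by omega)
    linarith
  have hK0 : (0:ℝ) ≤ ∑ j ∈ T, 1/|(j:ℝ)| :=
    Finset.sum_nonneg fun j _ => by positivity
  have hQ : ∑ j ∈ T, 1/|(j:ℝ)|^2 ≤ 4 := by
    rw [hT, sum_T N _ (fun j => by rw [habsneg])]
    have h := sum_invsq_le N (by omega)
    have : (0:ℝ) ≤ 1/(N:ℝ) := by positivity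
    linarith
  -- Step 1 : factor out the j₄ sum
  have step1 : ∑ j₁ ∈ T, ∑ j₂ ∈ T, ∑ j₄ ∈ T,
        (if (N : ℤ) < |j₁ + j₂| then
           (1 : ℝ) / (|(j₁ : ℝ)| ^ (m + 1) * |(j₂ : ℝ)| ^ (m - 1) * |(j₄ : ℝ)|) else 0)
      = (∑ j₁ ∈ T, ∑ j₂ ∈ T, (if (N : ℤ) < |j₁ + j₂| then
           (1 : ℝ) / (|(j₁ : ℝ)| ^ (m + 1) * |(j₂ : ℝ)| ^ (m - 1)) else 0))
        * (∑ j₄ ∈ T, 1/|(j₄:ℝ)|) := by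
    rw [Finset.sum_mul]
    refine Finset.sum_congr rfl fun j₁ _ => ?_
    rw [Finset.sum_mul]
    refine Finset.sum_congr rfl fun j₂ _ => ?_
    rw [Finset.mul_sum]
    refine Finset.sum_congr rfl fun j₄ _ => ?_
    split_ifs with hc
    · rw [div_mul_div_comm, one_mul]
    · rw [zero_mul]
  rw [step1]
  -- Step 2 : split the pair sum
  have step2 : ∀ j₁ j₂ : ℤ,
      (if (N : ℤ) < |j₁ + j₂| then
         (1 : ℝ) / (|(j₁ : ℝ)| ^ (m + 1) * |(j₂ : ℝ)| ^ (m - 1)) else 0)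
      = (if (N : ℤ) < |j₁ + j₂| ∧ |j₂| ≤ |j₁| then
         (1 : ℝ) / (|(j₁ : ℝ)| ^ (m + 1) * |(j₂ : ℝ)| ^ (m - 1)) else 0)
      + (if (N : ℤ) < |j₁ + j₂| ∧ |j₁| < |j₂| then
         (1 : ℝ) / (|(j₁ : ℝ)| ^ (m + 1) * |(j₂ : ℝ)| ^ (m - 1)) else 0) := by
    intro j₁ j₂
    by_cases hc : (N : ℤ) < |j₁ + j₂|
    · by_cases hd : |j₂| ≤ |j₁|
      · simp [hc, hd, not_lt.mpr hd]
      · simp [hc, hd, not_le.mp hd]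
    · simp [hc]
  -- bound for part A
  have hSA : ∑ j₁ ∈ T, ∑ j₂ ∈ T, (if (N : ℤ) < |j₁ + j₂| ∧ |j₂| ≤ |j₁| then
         (1 : ℝ) / (|(j₁ : ℝ)| ^ (m + 1) * |(j₂ : ℝ)| ^ (m - 1)) else 0)
      ≤ 16*(1+L)^2/(N:ℝ)^2 := by
    have hterm : ∀ j₁ ∈ T, ∀ j₂ ∈ T,
        (if (N : ℤ) < |j₁ + j₂| ∧ |j₂| ≤ |j₁| then
           (1 : ℝ) / (|(j₁ : ℝ)| ^ (m + 1) * |(j₂ : ℝ)| ^ (m - 1)) else 0)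
        ≤ (2/(N:ℝ)*(1/|(j₁:ℝ)|)) * (2/(N:ℝ)*(1/|(j₂:ℝ)|)) := by
      intro j₁ hj₁ j₂ hj₂
      obtain ⟨ha1, ha2, ha0, haN⟩ := hmem j₁ hj₁
      obtain ⟨hb1, hb2, hb0, hbN⟩ := hmem j₂ hj₂
      split_ifs with hc
      · obtain ⟨hc1, hc2⟩ := hc
        have htri : |j₁ + j₂| ≤ |j₁| + |j₂| := abs_add_le _ _
        have hint : (N:ℤ) + 1 ≤ 2 * |j₁| := by omega
        have han : (N:ℝ)/2 ≤ |(j₁:ℝ)| := by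
          have : ((N:ℤ):ℝ) + 1 ≤ 2 * ((|j₁|:ℤ):ℝ) := by exact_mod_cast hint
          rw [Int.cast_abs] at this
          push_cast at this
          linarith
        exact termboundA m hm _ _ _ ha1 hb1 hn0 han
      · positivity
    calc ∑ j₁ ∈ T, ∑ j₂ ∈ T, (if (N : ℤ) < |j₁ + j₂| ∧ |j₂| ≤ |j₁| then
           (1 : ℝ) / (|(j₁ : ℝ)| ^ (m + 1) * |(j₂ : ℝ)| ^ (m - 1)) else 0)
        ≤ ∑ j₁ ∈ T, ∑ j₂ ∈ T, (2/(N:ℝ)*(1/|(j₁:ℝ)|)) * (2/(N:ℝ)*(1/|(j₂:ℝ)|)) := by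
          refine Finset.sum_le_sum fun j₁ hj₁ => Finset.sum_le_sum fun j₂ hj₂ => ?_
          exact hterm j₁ hj₁ j₂ hj₂
      _ = (∑ j₁ ∈ T, 2/(N:ℝ)*(1/|(j₁:ℝ)|)) * (∑ j₂ ∈ T, 2/(N:ℝ)*(1/|(j₂:ℝ)|)) :=
          (Finset.sum_mul_sum T T _ _).symm
      _ ≤ (2/(N:ℝ)*(2*(1+L))) * (2/(N:ℝ)*(2*(1+L))) := by
          have h1 : ∑ j ∈ T, 2/(N:ℝ)*(1/|(j:ℝ)|) ≤ 2/(N:ℝ)*(2*(1+L)) := by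
            rw [← Finset.mul_sum]
            exact mul_le_mul_of_nonneg_left hK (by positivity)
          have h2 : (0:ℝ) ≤ ∑ j ∈ T, 2/(N:ℝ)*(1/|(j:ℝ)|) := by
            rw [← Finset.mul_sum]; positivity
          exact mul_le_mul h1 h1 h2 (by positivity)
      _ = 16*(1+L)^2/(N:ℝ)^2 := by field_simp; ring
  -- bound for part B
  have hSB : ∑ j₁ ∈ T, ∑ j₂ ∈ T, (if (N : ℤ) < |j₁ + j₂| ∧ |j₁| < |j₂| then
         (1 : ℝ) / (|(j₁ : ℝ)| ^ (m + 1) * |(j₂ : ℝ)| ^ (m - 1)) else 0)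
      ≤ 16/(N:ℝ) := by
    have hinner : ∀ j₁ ∈ T, ∑ j₂ ∈ T, (if (N : ℤ) < |j₁ + j₂| ∧ |j₁| < |j₂| then
           (1 : ℝ) / (|(j₁ : ℝ)| ^ (m + 1) * |(j₂ : ℝ)| ^ (m - 1)) else 0)
        ≤ 4/(N:ℝ) * (1/|(j₁:ℝ)|^2) := by
      intro j₁ hj₁
      obtain ⟨ha1, ha2, ha0, haN⟩ := hmem j₁ hj₁
      have ha0' : (0:ℝ) < |(j₁:ℝ)| := by linarith
      rw [← Finset.sum_filter]
      have hcard := cardbound N j₁ haN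
      have hbd : ∀ j₂ ∈ T.filter (fun j₂ => (N:ℤ) < |j₁ + j₂| ∧ |j₁| < |j₂|),
          (1 : ℝ) / (|(j₁ : ℝ)| ^ (m + 1) * |(j₂ : ℝ)| ^ (m - 1))
          ≤ 2/(N:ℝ) * (1/|(j₁:ℝ)|^3) := by
        intro j₂ hj₂
        rw [Finset.mem_filter] at hj₂
        obtain ⟨hj₂T, hc1, hc2⟩ := hj₂
        obtain ⟨hb1, hb2, hb0, hbN⟩ := hmem j₂ hj₂T
        have htri : |j₁ + j₂| ≤ |j₁| + |j₂| := abs_add_le _ _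
        have hint : (N:ℤ) + 1 ≤ 2 * |j₂| := by omega
        have hbn : (N:ℝ)/2 ≤ |(j₂:ℝ)| := by
          have : ((N:ℤ):ℝ) + 1 ≤ 2 * ((|j₂|:ℤ):ℝ) := by exact_mod_cast hint
          rw [Int.cast_abs] at this
          push_cast at this
          linarith
        exact termboundB m hm _ _ _ ha1 hb1 hn0 hbn
      calc ∑ j₂ ∈ T.filter (fun j₂ => (N:ℤ) < |j₁ + j₂| ∧ |j₁| < |j₂|),
            (1 : ℝ) / (|(j₁ : ℝ)| ^ (m + 1) * |(j₂ : ℝ)| ^ (m - 1))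
          ≤ (T.filter (fun j₂ => (N:ℤ) < |j₁ + j₂| ∧ |j₁| < |j₂|)).card
              • (2/(N:ℝ) * (1/|(j₁:ℝ)|^3)) := Finset.sum_le_card_nsmul _ _ _ hbd
        _ = ((T.filter (fun j₂ => (N:ℤ) < |j₁ + j₂| ∧ |j₁| < |j₂|)).card : ℝ)
              * (2/(N:ℝ) * (1/|(j₁:ℝ)|^3)) := nsmul_eq_mul _ _
        _ ≤ (2 * j₁.natAbs : ℝ) * (2/(N:ℝ) * (1/|(j₁:ℝ)|^3)) := by
            apply mul_le_mul_of_nonneg_right _ (by positivity)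
            exact_mod_cast hcard
        _ = 4/(N:ℝ) * (1/|(j₁:ℝ)|^2) := by
            rw [show ((j₁.natAbs : ℕ) : ℝ) = |(j₁:ℝ)| from (abs_cast_real j₁).symm]
            have hgen : ∀ x : ℝ, x ≠ 0 → (2*x) * (2/(N:ℝ)*(1/x^3)) = 4/(N:ℝ)*(1/x^2) := by
              intro x hx
              field_simp
              ring
            exact hgen _ (ne_of_gt ha0')
    calc ∑ j₁ ∈ T, ∑ j₂ ∈ T, (if (N : ℤ) < |j₁ + j₂| ∧ |j₁| < |j₂| then
           (1 : ℝ) / (|(j₁ : ℝ)| ^ (m + 1) * |(j₂ : ℝ)| ^ (m - 1)) else 0)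
        ≤ ∑ j₁ ∈ T, 4/(N:ℝ) * (1/|(j₁:ℝ)|^2) := Finset.sum_le_sum hinner
      _ = 4/(N:ℝ) * ∑ j₁ ∈ T, 1/|(j₁:ℝ)|^2 := by rw [Finset.mul_sum]
      _ ≤ 4/(N:ℝ) * 4 := mul_le_mul_of_nonneg_left hQ (by positivity)
      _ = 16/(N:ℝ) := by ring
  -- combine
  have hS : ∑ j₁ ∈ T, ∑ j₂ ∈ T, (if (N : ℤ) < |j₁ + j₂| then
         (1 : ℝ) / (|(j₁ : ℝ)| ^ (m + 1) * |(j₂ : ℝ)| ^ (m - 1)) else 0)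
      ≤ 16*(1+L)^2/(N:ℝ)^2 + 16/(N:ℝ) := by
    have : ∑ j₁ ∈ T, ∑ j₂ ∈ T, (if (N : ℤ) < |j₁ + j₂| then
         (1 : ℝ) / (|(j₁ : ℝ)| ^ (m + 1) * |(j₂ : ℝ)| ^ (m - 1)) else 0)
      = (∑ j₁ ∈ T, ∑ j₂ ∈ T, (if (N : ℤ) < |j₁ + j₂| ∧ |j₂| ≤ |j₁| then
         (1 : ℝ) / (|(j₁ : ℝ)| ^ (m + 1) * |(j₂ : ℝ)| ^ (m - 1)) else 0))
      + (∑ j₁ ∈ T, ∑ j₂ ∈ T, (if (N : ℤ) < |j₁ + j₂| ∧ |j₁| < |j₂| then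
         (1 : ℝ) / (|(j₁ : ℝ)| ^ (m + 1) * |(j₂ : ℝ)| ^ (m - 1)) else 0)) := by
      rw [← Finset.sum_add_distrib]
      refine Finset.sum_congr rfl fun j₁ _ => ?_
      rw [← Finset.sum_add_distrib]
      exact Finset.sum_congr rfl fun j₂ _ => step2 j₁ j₂
    rw [this]
    linarith
  have hS0 : (0:ℝ) ≤ ∑ j₁ ∈ T, ∑ j₂ ∈ T, (if (N : ℤ) < |j₁ + j₂| then
         (1 : ℝ) / (|(j₁ : ℝ)| ^ (m + 1) * |(j₂ : ℝ)| ^ (m - 1)) else 0) := by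
    refine Finset.sum_nonneg fun j₁ _ => Finset.sum_nonneg fun j₂ _ => ?_
    split_ifs <;> positivity
  calc (∑ j₁ ∈ T, ∑ j₂ ∈ T, (if (N : ℤ) < |j₁ + j₂| then
           (1 : ℝ) / (|(j₁ : ℝ)| ^ (m + 1) * |(j₂ : ℝ)| ^ (m - 1)) else 0))
        * (∑ j₄ ∈ T, 1/|(j₄:ℝ)|)
      ≤ (16*(1+L)^2/(N:ℝ)^2 + 16/(N:ℝ)) * (2*(1+L)) := by
        apply mul_le_mul hS hK hK0
        positivity
    _ ≤ 2000 * L^2 / (N:ℝ) := by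
        have h3L : 1 + L ≤ 3*L := by linarith
        have hcube : (1+L)^3 ≤ 27*L^3 := by
          calc (1+L)^3 ≤ (3*L)^3 := pow_le_pow_left₀ (by linarith) (by linarith) 3
            _ = 27*L^3 := by ring
        have hA : 16*(1+L)^2/(N:ℝ)^2 * (2*(1+L)) ≤ 864 * L^2/(N:ℝ) := by
          rw [div_mul_eq_mul_div, div_le_div_iff₀ (by positivity) (by positivity)]
          nlinarith [mul_le_mul_of_nonneg_right hcube (le_of_lt hn0),
            mul_le_mul_of_nonneg_right hLn (by positivity : (0:ℝ) ≤ L^2*(N:ℝ))]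
        have hB : 16/(N:ℝ) * (2*(1+L)) ≤ 192 * L^2/(N:ℝ) := by
          rw [div_mul_eq_mul_div, div_le_div_iff₀ (by positivity) (by positivity)]
          have hLL : L ≤ 2*L^2 := by nlinarith
          nlinarith [mul_le_mul_of_nonneg_right h3L (le_of_lt hn0),
            mul_le_mul_of_nonneg_right hLL (le_of_lt hn0)]
        calc (16*(1+L)^2/(N:ℝ)^2 + 16/(N:ℝ)) * (2*(1+L))
            = 16*(1+L)^2/(N:ℝ)^2 * (2*(1+L)) + 16/(N:ℝ) * (2*(1+L)) := by ring
          _ ≤ 864 * L^2/(N:ℝ) + 192 * L^2/(N:ℝ) := add_le_add hA hB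
          _ = 1056 * (L^2/(N:ℝ)) := by ring
          _ ≤ 2000 * (L^2/(N:ℝ)) := by
              have : (0:ℝ) ≤ L^2/(N:ℝ) := by positivity
              linarith
          _ = 2000 * L^2 / (N:ℝ) := by ring
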